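/- Let (g,J) be a Lie algebra with complex structure. The adjoint representation ad : g → End(g) is an integrable representation of (g,J) on (g,J) (i.e. [J, ad(Jx)] + J[ad x, J] = 0 for all x ∈ g) if and only if J is integrable (the Nijenhuis tensor of J vanishes). -/
import Mathlib

/-- For a real Lie algebra `g` with almost complex structure `J`,
the adjoint representation is an integrable representation of `(g,J)` on
`(g,J)`, i.e. `[J, ad(Jx)] + J∘[ad(x), J] = 0` for all `x`, if and only if the
Nijenhuis tensor of `J` vanishes. -/
theorem ad_integrable_iff_nijenhuis_zero
    (g : Type) [LieRing g] [LieAlgebra ℝ g]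
    (J : g →ₗ[ℝ] g) (hJ : ∀ x : g, J (J x) = -x) :
    (∀ x : g, ⁅J, LieAlgebra.ad ℝ g (J x)⁆ + J * ⁅LieAlgebra.ad ℝ g x, J⁆ = 0) ↔
    (∀ x y : g, ⁅x, y⁆ - ⁅J x, J y⁆ + J ⁅J x, y⁆ + J ⁅x, J y⁆ = 0) := by
  constructor
  · intro h x y
    have := congrArg (fun f : g →ₗ[ℝ] g => f y) (h x)
    simp only [LinearMap.add_apply, Module.End.mul_apply, Ring.lie_def,
      LinearMap.sub_apply, LinearMap.comp_apply, LieAlgebra.ad_apply,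
      LinearMap.zero_apply, map_sub, hJ] at this
    linear_combination (norm := abel) this
  · intro h
    intro x
    ext y
    have := h x y
    simp only [LinearMap.add_apply, Module.End.mul_apply, Ring.lie_def,
      LinearMap.sub_apply, LinearMap.comp_apply, LieAlgebra.ad_apply,
      LinearMap.zero_apply, map_sub, hJ]
    linear_combination (norm := abel) this
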